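/- Let G = (V, E) be a finite directed graph with lower and upper arc capacities l, u : E → ℕ satisfying l(e) ≤ u(e) for all e, with disjoint source and sink sets S, T ⊆ V and a demand/supply function d : V → ℤ satisfying d(s) < 0 for s ∈ S, d(t) > 0 for t ∈ T, d(v) = 0 otherwise, and −d(S) = d(T). Let T' be an undirected tree whose vertex set is contained in V and contains S ∪ T, whose edges are new (not in E). For each edge {v, w} of T', let V_{T'}(v, w) be the set of vertices connected to v in T' after deleting the edge {v, w}; orient the edge from v to w if d(V_{T'}(v, w)) ≥ 0 and from w to v otherwise, and give the resulting arc lower and upper capacity both equal to |d(V_{T'}(v, w))| (i.e., equal to d(V_{T'}(v, w)) for the chosen orientation, which is nonnegative). Let Ĝ be the directed graph with arc set E together with these oriented tree arcs and the extended capacity bounds. Then G admits a saturating flow if and only if Ĝ admits a circulation. -/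

import Mathlib

open scoped Classical

/-- Net outflow of the function `f` at the vertex `v` in the directed graph whose arcs
are the elements of `E`, with tails `esrc` and heads `edst`. -/
noncomputable def netOutflow {V E : Type*} [Fintype E] (esrc edst : E → V)
    (f : E → ℝ) (v : V) : ℝ :=
  (∑ e ∈ Finset.univ.filter (fun e => esrc e = v), f e) -
    ∑ e ∈ Finset.univ.filter (fun e => edst e = v), f e

/-- A saturating flow: the flow respects the lower and upper capacities and every vertex
`v` has net outflow `-d v`; i.e. flow is conserved at vertices with `d v = 0`, every
source `s` (with `d s < 0`) has net outflow `-d s`, and every sink `t` (with `d t > 0`)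
has net inflow `d t`. -/
def IsSaturatingFlow {V E : Type*} [Fintype E] (esrc edst : E → V)
    (l u : E → ℕ) (d : V → ℤ) (f : E → ℝ) : Prop :=
  (∀ e, (l e : ℝ) ≤ f e ∧ f e ≤ (u e : ℝ)) ∧
  ∀ v, netOutflow esrc edst f v = -(d v : ℝ)

/-- A circulation: the flow respects the lower and upper bounds and is conserved at
every vertex. -/
def IsCirculation {V E : Type*} [Fintype E] (esrc edst : E → V)
    (lo hi : E → ℤ) (g : E → ℝ) : Prop :=
  (∀ e, (lo e : ℝ) ≤ g e ∧ g e ≤ (hi e : ℝ)) ∧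
  ∀ v, netOutflow esrc edst g v = 0

/-- `treeSide Tr d v w` is `d(V_{T'}(v, w))`: the sum of the demands over the set of
vertices that remain connected to `v` in the tree `Tr` after deleting the edge `{v, w}`. -/
noncomputable def treeSide {V : Type*} [Fintype V] (Tr : SimpleGraph V) (d : V → ℤ)
    (v w : V) : ℤ :=
  ∑ x ∈ Finset.univ.filter
      (fun x => (Tr.deleteEdges {Sym2.mk v w}).Reachable v x), d x

/-- The arcs obtained by orienting the edges of the tree `Tr`: the edge `{v, w}` is
oriented from `v` to `w` if `d(V_{T'}(v, w)) ≥ 0` and from `w` to `v` otherwise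
(breaking ties, when `d(V_{T'}(v, w)) = 0`, by the linear order on `V`). -/
def TreeArc {V : Type*} [Fintype V] [LinearOrder V] (Tr : SimpleGraph V) (d : V → ℤ) :
    Type _ :=
  {q : V × V // Tr.Adj q.1 q.2 ∧ 0 ≤ treeSide Tr d q.1 q.2 ∧
    (treeSide Tr d q.1 q.2 = 0 → q.1 ≤ q.2)}

noncomputable instance {V : Type*} [Fintype V] [LinearOrder V] (Tr : SimpleGraph V)
    (d : V → ℤ) : Fintype (TreeArc Tr d) := by
  unfold TreeArc; infer_instance

open SimpleGraph

private lemma reach_split {V : Type*} {Tr : SimpleGraph V} (v w : V) {a x : V}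
    (p : Tr.Walk a x) :
    (Tr.deleteEdges {s(v, w)}).Reachable a x ∨
    (Tr.deleteEdges {s(v, w)}).Reachable v x ∨
    (Tr.deleteEdges {s(v, w)}).Reachable w x := by
  induction p with
  | nil => exact Or.inl (Reachable.refl _)
  | @cons a b x h q ih =>
    rcases ih with hb | hv | hw
    · by_cases he : s(a, b) = s(v, w)
      · rw [Sym2.eq_iff] at he
        rcases he with ⟨rfl, rfl⟩ | ⟨rfl, rfl⟩
        · exact Or.inr (Or.inr hb)
        · exact Or.inr (Or.inl hb)
      · exact Or.inl ((SimpleGraph.Adj.reachable (by simp [h, he])).trans hb)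
    · exact Or.inr (Or.inl hv)
    · exact Or.inr (Or.inr hw)

private lemma bridge_not_reach {V : Type*} {Tr : SimpleGraph V} (hacyc : Tr.IsAcyclic)
    {v w : V} (h : Tr.Adj v w) : ¬ (Tr.deleteEdges {s(v, w)}).Reachable v w :=
  ((isBridge_iff).mp (isAcyclic_iff_forall_edge_isBridge.mp hacyc (Tr.mem_edgeSet.mpr h)))

private lemma comp_sum_zero {V : Type*} [Fintype V]
    (S T : Finset V) (hST : Disjoint S T) (d : V → ℤ)
    (hd0 : ∀ v, v ∉ S → v ∉ T → d v = 0)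
    (hbal : -(∑ s ∈ S, d s) = ∑ t ∈ T, d t)
    (Tr : SimpleGraph V)
    (hconn : ∀ a ∈ Tr.support ∪ ↑S ∪ ↑T, ∀ b ∈ Tr.support ∪ ↑S ∪ ↑T, Tr.Reachable a b)
    {v : V} (hv : v ∈ Tr.support) :
    ∑ x ∈ Finset.univ.filter (fun x => Tr.Reachable v x), d x = 0 := by
  have hsub : S ∪ T ⊆ Finset.univ.filter (fun x => Tr.Reachable v x) := by
    intro x hx
    simp only [Finset.mem_filter, Finset.mem_univ, true_and]
    rw [Finset.mem_union] at hx
    refine hconn v (Or.inl (Or.inl hv)) x ?_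
    rcases hx with hx | hx
    · exact Or.inl (Or.inr (by exact_mod_cast hx))
    · exact Or.inr (by exact_mod_cast hx)
  rw [← Finset.sum_subset hsub (by
    intro x _ hxn
    rw [Finset.mem_union] at hxn
    push_neg at hxn
    exact hd0 x hxn.1 hxn.2)]
  rw [Finset.sum_union hST]
  linarith

private lemma d_eq_zero_of_not_support {V : Type*} [Fintype V]
    (S T : Finset V) (hST : Disjoint S T) (d : V → ℤ)
    (hdS : ∀ s ∈ S, d s < 0) (hdT : ∀ t ∈ T, 0 < d t)
    (hd0 : ∀ v, v ∉ S → v ∉ T → d v = 0)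
    (hbal : -(∑ s ∈ S, d s) = ∑ t ∈ T, d t)
    (Tr : SimpleGraph V)
    (hconn : ∀ a ∈ Tr.support ∪ ↑S ∪ ↑T, ∀ b ∈ Tr.support ∪ ↑S ∪ ↑T, Tr.Reachable a b)
    {v : V} (hv : v ∉ Tr.support) : d v = 0 := by
  by_contra hne
  have hvST : v ∈ S ∨ v ∈ T := by
    by_contra h; push_neg at h; exact hne (hd0 v h.1 h.2)
  obtain ⟨t, ht, hvt⟩ : ∃ t, (t ∈ S ∪ T) ∧ t ≠ v := by
    rcases hvST with hS | hT
    · have hTne : T.Nonempty := by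
        by_contra hTe
        rw [Finset.not_nonempty_iff_eq_empty] at hTe
        have h1 : ∑ s ∈ S, d s < ∑ s ∈ S, (0 : ℤ) :=
          Finset.sum_lt_sum_of_nonempty ⟨v, hS⟩ (fun i hi => hdS i hi)
        rw [hTe] at hbal
        simp at hbal h1
        omega
      obtain ⟨t, ht⟩ := hTne
      exact ⟨t, Finset.mem_union_right _ ht,
        fun h => (Finset.disjoint_left.mp hST hS (h ▸ ht))⟩
    · have hSne : S.Nonempty := by
        by_contra hSe
        rw [Finset.not_nonempty_iff_eq_empty] at hSe
        have h1 : ∑ t ∈ T, (0 : ℤ) < ∑ t ∈ T, d t :=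
          Finset.sum_lt_sum_of_nonempty ⟨v, hT⟩ (fun i hi => hdT i hi)
        rw [hSe] at hbal
        simp at hbal h1
        omega
      obtain ⟨s, hs⟩ := hSne
      exact ⟨s, Finset.mem_union_left _ hs,
        fun h => (Finset.disjoint_left.mp hST hs (h ▸ hT))⟩
  have hmem : ∀ y ∈ S ∪ T, y ∈ Tr.support ∪ ↑S ∪ ↑T := by
    intro y hy
    rw [Finset.mem_union] at hy
    rcases hy with hy | hy
    · exact Or.inl (Or.inr (by exact_mod_cast hy))
    · exact Or.inr (by exact_mod_cast hy)
  have hr : Tr.Reachable v t := by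
    refine hconn v (hmem v ?_) t (hmem t ht)
    rcases hvST with h | h
    · exact Finset.mem_union_left _ h
    · exact Finset.mem_union_right _ h
  obtain ⟨p⟩ := hr
  cases p with
  | nil => exact hvt rfl
  | cons h q => exact hv ⟨_, h⟩

private lemma side_add {V : Type*} [Fintype V]
    (S T : Finset V) (hST : Disjoint S T) (d : V → ℤ)
    (hd0 : ∀ v, v ∉ S → v ∉ T → d v = 0)
    (hbal : -(∑ s ∈ S, d s) = ∑ t ∈ T, d t)
    (Tr : SimpleGraph V) (hacyc : Tr.IsAcyclic)
    (hconn : ∀ a ∈ Tr.support ∪ ↑S ∪ ↑T, ∀ b ∈ Tr.support ∪ ↑S ∪ ↑T, Tr.Reachable a b)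
    {v w : V} (h : Tr.Adj v w) :
    treeSide Tr d v w + treeSide Tr d w v = 0 := by
  have hts : treeSide Tr d w v =
      ∑ x ∈ Finset.univ.filter
        (fun x => (Tr.deleteEdges {s(v, w)}).Reachable w x), d x := by
    rw [treeSide, show (Sym2.mk w v) = s(v, w) from Sym2.eq_swap]
  have hdisj : Disjoint
      (Finset.univ.filter (fun x => (Tr.deleteEdges {s(v, w)}).Reachable v x))
      (Finset.univ.filter (fun x => (Tr.deleteEdges {s(v, w)}).Reachable w x)) := by
    rw [Finset.disjoint_left]
    intro x hx hx'
    rw [Finset.mem_filter] at hx hx'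
    exact bridge_not_reach hacyc h (hx.2.trans hx'.2.symm)
  have hunion :
      (Finset.univ.filter (fun x => (Tr.deleteEdges {s(v, w)}).Reachable v x)) ∪
      (Finset.univ.filter (fun x => (Tr.deleteEdges {s(v, w)}).Reachable w x)) =
      Finset.univ.filter (fun x => Tr.Reachable v x) := by
    ext x
    simp only [Finset.mem_union, Finset.mem_filter, Finset.mem_univ, true_and]
    constructor
    · rintro (hx | hx)
      · exact hx.mono (Tr.deleteEdges_le _)
      · exact h.reachable.trans (hx.mono (Tr.deleteEdges_le _))
    · rintro ⟨p⟩
      rcases reach_split v w p with h1 | h1 | h1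
      · exact Or.inl h1
      · exact Or.inl h1
      · exact Or.inr h1
  have := Finset.sum_union (f := d) hdisj
  rw [hunion, comp_sum_zero S T hST d hd0 hbal Tr hconn ⟨w, h⟩] at this
  rw [treeSide, hts]
  linarith

private lemma path_snd {V : Type*} {Tr : SimpleGraph V} (hacyc : Tr.IsAcyclic)
    {v w x : V} (hadj : Tr.Adj v w)
    (hx : (Tr.deleteEdges {s(v, w)}).Reachable w x) :
    ∃ p : Tr.Walk v x, p.IsPath ∧ p.getVert 1 = w := by
  obtain ⟨p0⟩ := hx
  set p1 := p0.toPath with hp1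
  have hvs : v ∉ (p1 : (Tr.deleteEdges {s(v, w)}).Walk w x).support := by
    intro hvs
    exact bridge_not_reach hacyc hadj
      (Reachable.symm ⟨(p1 : (Tr.deleteEdges {s(v, w)}).Walk w x).takeUntil v hvs⟩)
  set q := (p1 : (Tr.deleteEdges {s(v, w)}).Walk w x).mapLe (Tr.deleteEdges_le _) with hq
  have hqp : q.IsPath := p1.2.mapLe _
  have hvq : v ∉ q.support := by
    rw [hq, Walk.support_map]
    simp only [List.mem_map]
    rintro ⟨y, hy, hyv⟩
    change y = v at hyv
    exact hvs (hyv ▸ hy)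
  exact ⟨Walk.cons hadj q, hqp.cons hvq,
    by rw [Walk.getVert_cons_succ, Walk.getVert_zero]⟩

private lemma sum_nbrs {V : Type*} [Fintype V]
    (S T : Finset V) (hST : Disjoint S T) (d : V → ℤ)
    (hd0 : ∀ v, v ∉ S → v ∉ T → d v = 0)
    (hbal : -(∑ s ∈ S, d s) = ∑ t ∈ T, d t)
    (Tr : SimpleGraph V) (hacyc : Tr.IsAcyclic)
    (hconn : ∀ a ∈ Tr.support ∪ ↑S ∪ ↑T, ∀ b ∈ Tr.support ∪ ↑S ∪ ↑T, Tr.Reachable a b)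
    {v : V} (hv : v ∈ Tr.support) :
    ∑ w ∈ Finset.univ.filter (fun w => Tr.Adj v w), treeSide Tr d v w = d v := by
  have hcomp := comp_sum_zero S T hST d hd0 hbal Tr hconn hv
  set N := Finset.univ.filter (fun w => Tr.Adj v w) with hN
  set Bf : V → Finset V := fun w =>
    Finset.univ.filter (fun x => (Tr.deleteEdges {s(v, w)}).Reachable w x) with hBf
  have hterm : ∀ w ∈ N, treeSide Tr d v w = - ∑ x ∈ Bf w, d x := by
    intro w hwN
    have hw : Tr.Adj v w := by
      rw [hN] at hwN; exact (Finset.mem_filter.mp hwN).2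
    have hdisj : Disjoint
        (Finset.univ.filter (fun x => (Tr.deleteEdges {s(v, w)}).Reachable v x))
        (Bf w) := by
      rw [Finset.disjoint_left]
      intro x hx hx'
      rw [Finset.mem_filter] at hx
      rw [hBf, Finset.mem_filter] at hx'
      exact bridge_not_reach hacyc hw (hx.2.trans hx'.2.symm)
    have hunion :
        (Finset.univ.filter (fun x => (Tr.deleteEdges {s(v, w)}).Reachable v x)) ∪
        Bf w = Finset.univ.filter (fun x => Tr.Reachable v x) := by
      ext x
      simp only [hBf, Finset.mem_union, Finset.mem_filter, Finset.mem_univ, true_and]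
      constructor
      · rintro (hx | hx)
        · exact hx.mono (Tr.deleteEdges_le _)
        · exact hw.reachable.trans (hx.mono (Tr.deleteEdges_le _))
      · rintro ⟨p⟩
        rcases reach_split v w p with h1 | h1 | h1
        · exact Or.inl h1
        · exact Or.inl h1
        · exact Or.inr h1
    have hsu := Finset.sum_union (f := d) hdisj
    rw [hunion, hcomp] at hsu
    rw [treeSide]
    linarith
  rw [Finset.sum_congr rfl hterm, Finset.sum_neg_distrib]
  have hpair : (N : Set V).PairwiseDisjoint Bf := by
    intro a ha b hb hab
    have hA : Tr.Adj v a := by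
      rw [hN] at ha; simpa using ha
    have hB : Tr.Adj v b := by
      rw [hN] at hb; simpa using hb
    rw [Function.onFun, Finset.disjoint_left]
    intro x hxa hxb
    rw [hBf, Finset.mem_filter] at hxa hxb
    obtain ⟨p, hp, hp1⟩ := path_snd hacyc hA hxa.2
    obtain ⟨p', hp', hp1'⟩ := path_snd hacyc hB hxb.2
    have hpq : (⟨p, hp⟩ : Tr.Path v x) = ⟨p', hp'⟩ := hacyc.path_unique _ _
    have : p = p' := congrArg Subtype.val hpq
    exact hab (by rw [← hp1, ← hp1', this])
  have hbiu : N.biUnion Bf =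
      (Finset.univ.filter (fun x => Tr.Reachable v x)).erase v := by
    ext x
    simp only [hN, hBf, Finset.mem_biUnion, Finset.mem_erase, Finset.mem_filter,
      Finset.mem_univ, true_and]
    constructor
    · rintro ⟨w, hw, hx⟩
      refine ⟨?_, hw.reachable.trans (hx.mono (Tr.deleteEdges_le _))⟩
      rintro rfl
      exact bridge_not_reach hacyc hw hx.symm
    · rintro ⟨hxv, hr⟩
      obtain ⟨p0⟩ := hr
      obtain ⟨p, hp⟩ := p0.toPath
      cases p with
      | nil => exact absurd rfl hxv.symm
      | @cons _ b _ hadj q =>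
        rw [Walk.cons_isPath_iff] at hp
        refine ⟨b, hadj, ?_⟩
        have hedge : ∀ e ∈ q.edges, e ∉ ({s(v, b)} : Set (Sym2 V)) := by
          intro e he hein
          rw [Set.mem_singleton_iff] at hein
          subst hein
          exact hp.2 (q.fst_mem_support_of_mem_edges he)
        exact ⟨q.toDeleteEdges _ hedge⟩
  have hsum := Finset.sum_biUnion (f := d) hpair
  rw [hbiu] at hsum
  have hvC : v ∈ Finset.univ.filter (fun x => Tr.Reachable v x) :=
    Finset.mem_filter.mpr ⟨Finset.mem_univ v, SimpleGraph.Reachable.refl v⟩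
  rw [Finset.sum_erase_eq_sub hvC, hcomp] at hsum
  linarith

private lemma incidence {V : Type*} [Fintype V] [LinearOrder V]
    (S T : Finset V) (hST : Disjoint S T) (d : V → ℤ)
    (hdS : ∀ s ∈ S, d s < 0) (hdT : ∀ t ∈ T, 0 < d t)
    (hd0 : ∀ v, v ∉ S → v ∉ T → d v = 0)
    (hbal : -(∑ s ∈ S, d s) = ∑ t ∈ T, d t)
    (Tr : SimpleGraph V) (hacyc : Tr.IsAcyclic)
    (hconn : ∀ a ∈ Tr.support ∪ ↑S ∪ ↑T, ∀ b ∈ Tr.support ∪ ↑S ∪ ↑T, Tr.Reachable a b)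
    (v : V) :
    ((∑ q ∈ Finset.univ.filter (fun q : TreeArc Tr d => q.val.1 = v),
        treeSide Tr d q.val.1 q.val.2) -
      ∑ q ∈ Finset.univ.filter (fun q : TreeArc Tr d => q.val.2 = v),
        treeSide Tr d q.val.1 q.val.2) = d v := by
  by_cases hv : v ∈ Tr.support
  · set P := Finset.univ.filter (fun q : TreeArc Tr d => q.val.1 = v) with hP
    set M := Finset.univ.filter (fun q : TreeArc Tr d => q.val.2 = v) with hM
    set F : TreeArc Tr d → ℤ :=
      fun q => treeSide Tr d v (if q.val.1 = v then q.val.2 else q.val.1) with hF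
    have hPM : Disjoint P M := by
      rw [Finset.disjoint_left]
      intro q hq hq'
      rw [hP, Finset.mem_filter] at hq
      rw [hM, Finset.mem_filter] at hq'
      have := q.prop.1
      rw [hq.2, hq'.2] at this
      exact Tr.loopless.irrefl v this
    have step1 : ∑ q ∈ P, treeSide Tr d q.val.1 q.val.2 = ∑ q ∈ P, F q := by
      refine Finset.sum_congr rfl (fun q hq => ?_)
      rw [hP, Finset.mem_filter] at hq
      rw [hF]
      simp only []
      rw [if_pos hq.2, hq.2]
    have step2 : (- ∑ q ∈ M, treeSide Tr d q.val.1 q.val.2) = ∑ q ∈ M, F q := by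
      rw [← Finset.sum_neg_distrib]
      refine Finset.sum_congr rfl (fun q hq => ?_)
      rw [hM, Finset.mem_filter] at hq
      have hne : ¬ (q.val.1 = v) := by
        intro h1
        have := q.prop.1
        rw [h1, hq.2] at this
        exact Tr.loopless.irrefl v this
      have hadj : Tr.Adj q.val.1 v := hq.2 ▸ q.prop.1
      have hside := side_add S T hST d hd0 hbal Tr hacyc hconn hadj
      rw [hF]
      simp only [hne, if_false]
      rw [show treeSide Tr d q.val.1 q.val.2 = treeSide Tr d q.val.1 v from hq.2 ▸ rfl]
      linarith
    have hcombine : (∑ q ∈ P, treeSide Tr d q.val.1 q.val.2) -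
        ∑ q ∈ M, treeSide Tr d q.val.1 q.val.2 = ∑ q ∈ P ∪ M, F q := by
      rw [Finset.sum_union hPM, step1, ← step2]; ring
    rw [hcombine]
    have hbij : ∑ q ∈ P ∪ M, F q =
        ∑ w ∈ Finset.univ.filter (fun w => Tr.Adj v w), treeSide Tr d v w := by
      refine Finset.sum_bij (fun q _ => if q.val.1 = v then q.val.2 else q.val.1)
        ?_ ?_ ?_ ?_
      · intro q hq
        rw [Finset.mem_union, hP, hM, Finset.mem_filter, Finset.mem_filter] at hq
        simp only [Finset.mem_filter, Finset.mem_univ, true_and]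
        by_cases h1 : q.val.1 = v
        · rw [if_pos h1]; exact h1 ▸ q.prop.1
        · rw [if_neg h1]
          have h2 : q.val.2 = v := by
            rcases hq with h | h
            · exact absurd h.2 h1
            · exact h.2
          exact (h2 ▸ q.prop.1).symm
      · intro q1 hq1 q2 hq2 heq
        have heq' : (if (q1.val).1 = v then (q1.val).2 else (q1.val).1) =
            (if (q2.val).1 = v then (q2.val).2 else (q2.val).1) := heq
        have hform : ∀ q : TreeArc Tr d, q ∈ P ∪ M →
            q.val = (v, if q.val.1 = v then q.val.2 else q.val.1) ∨
            q.val = ((if q.val.1 = v then q.val.2 else q.val.1), v) := by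
          intro q hq
          rw [Finset.mem_union, hP, hM, Finset.mem_filter, Finset.mem_filter] at hq
          by_cases h1 : q.val.1 = v
          · left; rw [if_pos h1, ← h1]
          · right
            have h2 : q.val.2 = v := by
              rcases hq with h | h
              · exact absurd h.2 h1
              · exact h.2
            rw [if_neg h1, ← h2]
        have key : ∀ a b : TreeArc Tr d, ∀ w,
            a.val = (v, w) → b.val = (w, v) → False := by
          intro a b w ha hb
          have hA : Tr.Adj v w := by simpa [ha] using a.prop.1
          have hB1 : 0 ≤ treeSide Tr d v w := by simpa [ha] using a.prop.2.1
          have hC1 : treeSide Tr d v w = 0 → v ≤ w := by simpa [ha] using a.prop.2.2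
          have hB2 : 0 ≤ treeSide Tr d w v := by simpa [hb] using b.prop.2.1
          have hC2 : treeSide Tr d w v = 0 → w ≤ v := by simpa [hb] using b.prop.2.2
          have hside := side_add S T hST d hd0 hbal Tr hacyc hconn hA
          have hvw : v = w := le_antisymm (hC1 (by linarith)) (hC2 (by linarith))
          exact Tr.loopless.irrefl v (hvw ▸ hA)
        rcases hform q1 hq1 with h1 | h1 <;> rcases hform q2 hq2 with h2 | h2
        · exact Subtype.ext (by rw [h1, h2, heq'])
        · exact (key q1 q2 _ h1 (by rw [h2, heq'])).elim
        · exact (key q2 q1 _ (by rw [h2, ← heq']) h1).elim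
        · exact Subtype.ext (by rw [h1, h2, heq'])
      · intro w hwN
        rw [Finset.mem_filter] at hwN
        have hadj : Tr.Adj v w := hwN.2
        have hside := side_add S T hST d hd0 hbal Tr hacyc hconn hadj
        by_cases hc : 0 ≤ treeSide Tr d v w ∧ (treeSide Tr d v w = 0 → v ≤ w)
        · refine ⟨⟨(v, w), hadj, hc.1, hc.2⟩, ?_, ?_⟩
          · refine Finset.mem_union_left _ ?_
            rw [hP]
            exact Finset.mem_filter.mpr ⟨Finset.mem_univ _, rfl⟩
          · simp
        · push_neg at hc
          have h1 : 0 ≤ treeSide Tr d w v ∧ (treeSide Tr d w v = 0 → w ≤ v) := by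
            rcases le_or_gt 0 (treeSide Tr d v w) with h | h
            · obtain ⟨hz, hnle⟩ := hc h
              exact ⟨by linarith, fun _ => le_of_lt hnle⟩
            · refine ⟨by linarith, fun hz => ?_⟩
              exfalso; linarith
          refine ⟨⟨(w, v), hadj.symm, h1.1, h1.2⟩, ?_, ?_⟩
          · refine Finset.mem_union_right _ ?_
            rw [hM]
            exact Finset.mem_filter.mpr ⟨Finset.mem_univ _, rfl⟩
          · have hne : w ≠ v := hadj.ne'
            simp [hne]
      · intro a ha
        rfl
    rw [hbij]
    exact sum_nbrs S T hST d hd0 hbal Tr hacyc hconn hv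
  · have h1 : Finset.univ.filter (fun q : TreeArc Tr d => q.val.1 = v) = ∅ := by
      rw [Finset.filter_eq_empty_iff]
      intro q _ hq
      exact hv ⟨_, hq ▸ q.prop.1⟩
    have h2 : Finset.univ.filter (fun q : TreeArc Tr d => q.val.2 = v) = ∅ := by
      rw [Finset.filter_eq_empty_iff]
      intro q _ hq
      exact hv ⟨_, (hq ▸ q.prop.1).symm⟩
    rw [h1, h2]
    simp only [Finset.sum_empty, sub_zero]
    exact (d_eq_zero_of_not_support S T hST d hdS hdT hd0 hbal Tr hconn hv).symm

private lemma netOutflow_sum_elim {V E F : Type*} [Fintype E] [Fintype F]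
    (s1 d1 : E → V) (s2 d2 : F → V) (g : E ⊕ F → ℝ) (v : V) :
    netOutflow (Sum.elim s1 s2) (Sum.elim d1 d2) g v =
      netOutflow s1 d1 (fun e => g (Sum.inl e)) v +
      netOutflow s2 d2 (fun e => g (Sum.inr e)) v := by
  simp only [netOutflow, Finset.sum_filter, Fintype.sum_sum_type, Sum.elim_inl, Sum.elim_inr]
  exact (by intros; ring : ∀ a b c d' : ℝ, (a + b) - (c + d') = (a - c) + (b - d')) _ _ _ _

private lemma tree_netOutflow {V : Type*} [Fintype V] [LinearOrder V]
    (S T : Finset V) (hST : Disjoint S T) (d : V → ℤ)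
    (hdS : ∀ s ∈ S, d s < 0) (hdT : ∀ t ∈ T, 0 < d t)
    (hd0 : ∀ v, v ∉ S → v ∉ T → d v = 0)
    (hbal : -(∑ s ∈ S, d s) = ∑ t ∈ T, d t)
    (Tr : SimpleGraph V) (hacyc : Tr.IsAcyclic)
    (hconn : ∀ a ∈ Tr.support ∪ ↑S ∪ ↑T, ∀ b ∈ Tr.support ∪ ↑S ∪ ↑T, Tr.Reachable a b)
    (v : V) :
    netOutflow (fun q : TreeArc Tr d => q.val.1) (fun q => q.val.2)
      (fun q => ((treeSide Tr d q.val.1 q.val.2 : ℤ) : ℝ)) v = (d v : ℝ) := by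
  have h := incidence S T hST d hdS hdT hd0 hbal Tr hacyc hconn v
  rw [netOutflow, ← h]
  push_cast
  congr!

/-- Miller–Naor reduction: a flow network `G` with multiple sources `S` and sinks `T`,
balanced demands `d`, and an (added, planarity-preserving) tree `Tr` spanning `S ∪ T`
admits a saturating flow if and only if the circulation network `Ĝ`, obtained from `G`
by adding the oriented tree arcs with lower bound equal to upper bound equal to
`d(V_{T'}(v, w))`, admits a circulation. -/
theorem statement2 {V E : Type*} [Fintype V] [LinearOrder V] [Fintype E]
    (esrc edst : E → V) (l u : E → ℕ) (hlu : ∀ e, l e ≤ u e)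
    (S T : Finset V) (hST : Disjoint S T) (d : V → ℤ)
    (hdS : ∀ s ∈ S, d s < 0) (hdT : ∀ t ∈ T, 0 < d t)
    (hd0 : ∀ v, v ∉ S → v ∉ T → d v = 0)
    (hbal : -(∑ s ∈ S, d s) = ∑ t ∈ T, d t)
    (Tr : SimpleGraph V) (hacyc : Tr.IsAcyclic)
    (hconn : ∀ a ∈ Tr.support ∪ ↑S ∪ ↑T, ∀ b ∈ Tr.support ∪ ↑S ∪ ↑T, Tr.Reachable a b)
    (hnew : ∀ e : E, ¬ Tr.Adj (esrc e) (edst e)) :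
    (∃ f : E → ℝ, IsSaturatingFlow esrc edst l u d f) ↔
    (∃ g : (E ⊕ TreeArc Tr d) → ℝ,
      IsCirculation
        (Sum.elim esrc (fun q => q.val.1))
        (Sum.elim edst (fun q => q.val.2))
        (Sum.elim (fun e => (l e : ℤ)) (fun q => treeSide Tr d q.val.1 q.val.2))
        (Sum.elim (fun e => (u e : ℤ)) (fun q => treeSide Tr d q.val.1 q.val.2))
        g) := by
  constructor
  · rintro ⟨f, hbd, hcons⟩
    refine ⟨Sum.elim f (fun q => ((treeSide Tr d q.val.1 q.val.2 : ℤ) : ℝ)), ?_, ?_⟩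
    · rintro (e | q)
      · simp only [Sum.elim_inl]
        refine ⟨?_, ?_⟩
        · exact_mod_cast (hbd e).1
        · exact_mod_cast (hbd e).2
      · simp only [Sum.elim_inr]
        exact ⟨le_refl _, le_refl _⟩
    · intro v
      rw [netOutflow_sum_elim]
      rw [show (fun e => Sum.elim f
            (fun q : TreeArc Tr d => ((treeSide Tr d q.val.1 q.val.2 : ℤ) : ℝ))
            (Sum.inl e)) = f from rfl]
      rw [show (fun q => Sum.elim f
            (fun q : TreeArc Tr d => ((treeSide Tr d q.val.1 q.val.2 : ℤ) : ℝ))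
            (Sum.inr q)) =
          (fun q : TreeArc Tr d => ((treeSide Tr d q.val.1 q.val.2 : ℤ) : ℝ)) from rfl]
      rw [hcons v, tree_netOutflow S T hST d hdS hdT hd0 hbal Tr hacyc hconn v]
      ring
  · rintro ⟨g, hbd, hcons⟩
    refine ⟨fun e => g (Sum.inl e), ?_, ?_⟩
    · intro e
      have h := hbd (Sum.inl e)
      simp only [Sum.elim_inl] at h
      refine ⟨?_, ?_⟩
      · exact_mod_cast h.1
      · exact_mod_cast h.2
    · intro v
      have h0 := hcons v
      rw [netOutflow_sum_elim] at h0
      have hg : (fun q : TreeArc Tr d => g (Sum.inr q)) =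
          (fun q : TreeArc Tr d => ((treeSide Tr d q.val.1 q.val.2 : ℤ) : ℝ)) := by
        funext q
        have h := hbd (Sum.inr q)
        simp only [Sum.elim_inr] at h
        exact le_antisymm h.2 h.1
      rw [hg, tree_netOutflow S T hST d hdS hdT hd0 hbal Tr hacyc hconn v] at h0
      linarith
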